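/- Define q(z,t) = q_0 - 6z(z³ + 6t)/(z³ - 3t)² for t ∈ ℂ. Then q(z,t) = q_0 + 2 ∂_z² ln(z³ - 3t) = q_0 - 2 Σ_{j=1}^{3} (z - (3t)^{1/3} ε_j)^{-2}, where ε_j = exp(2πij/3), and q satisfies the first time-dependent KdV equation q_t - (1/4) q_{zzz} - (3/2) q q_z + (3/2) q_0 q_z = 0. -/

import Mathlib

open Complex

private lemma aux_cube (t z : ℂ) : HasDerivAt (fun w : ℂ => w ^ 3 - 3 * t) (3 * z ^ 2) z := by
  simpa using (hasDerivAt_pow 3 z).sub_const (3 * t)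

private lemma aux_ratio (t z : ℂ) (k : ℕ) (N : ℂ → ℂ) (N' : ℂ) (hN : HasDerivAt N N' z)
    (hz : z ^ 3 - 3 * t ≠ 0) :
    HasDerivAt (fun w => N w / (w ^ 3 - 3 * t) ^ (k + 1))
      ((N' * (z ^ 3 - 3 * t) - N z * (((k : ℂ) + 1) * 3 * z ^ 2)) / (z ^ 3 - 3 * t) ^ (k + 2)) z := by
  have hD := (aux_cube t z).pow (k + 1)
  have h := hN.div hD (pow_ne_zero _ hz)
  refine h.congr_deriv ?_
  simp only [Nat.add_sub_cancel, Pi.pow_apply]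
  push_cast
  field_simp
  ring

theorem rational_kdv_genus_two (q₀ : ℂ) (q : ℂ → ℂ → ℂ)
    (hq : ∀ z t : ℂ, q z t = q₀ - 6 * z * (z ^ 3 + 6 * t) / (z ^ 3 - 3 * t) ^ 2) :
    -- q = q₀ + 2 ∂_z² ln(z³ - 3t), i.e. q = q₀ + 2 ∂_z ((z³-3t)'/(z³-3t))
    (∀ t z : ℂ, z ^ 3 ≠ 3 * t →
      q z t = q₀ + 2 * deriv (fun w : ℂ => (3 * w ^ 2) / (w ^ 3 - 3 * t)) z) ∧
    -- partial fraction form over the cube roots of 3t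
    (∀ t : ℂ, t ≠ 0 → ∀ w : ℂ, w ^ 3 = 3 * t → ∀ z : ℂ, z ^ 3 ≠ 3 * t →
      q z t = q₀ - 2 * ∑ j ∈ Finset.range 3,
        ((z - w * Complex.exp (2 * Real.pi * Complex.I * ((j : ℕ) + 1) / 3)) ^ 2)⁻¹) ∧
    -- the first time-dependent KdV equation
    (∀ t z : ℂ, z ^ 3 ≠ 3 * t →
      deriv (fun s => q z s) t
        - (1 / 4) * deriv (fun w => deriv (fun w' => deriv (fun w'' => q w'' t) w') w) z
        - (3 / 2) * q z t * deriv (fun w => q w t) z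
        + (3 / 2) * q₀ * deriv (fun w => q w t) z = 0) := by
  refine ⟨?_, ?_, ?_⟩
  · -- Part 1
    intro t z hz
    have hz' : z ^ 3 - 3 * t ≠ 0 := sub_ne_zero.mpr hz
    have hN : HasDerivAt (fun w : ℂ => 3 * w ^ 2) (6 * z) z := by
      have := (hasDerivAt_pow 2 z).const_mul (3 : ℂ)
      refine this.congr_deriv ?_
      push_cast
      ring
    have hd : HasDerivAt (fun w : ℂ => 3 * w ^ 2 / (w ^ 3 - 3 * t))
        ((6 * z * (z ^ 3 - 3 * t) - 3 * z ^ 2 * (3 * z ^ 2)) / (z ^ 3 - 3 * t) ^ 2) z := by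
      have := hN.div (aux_cube t z) hz'
      exact this
      try ring
    rw [hq, hd.deriv]
    field_simp
    try ring
  · -- Part 2 : partial fractions
    intro t ht w hw z hz
    set ε : ℂ := Complex.exp (2 * Real.pi * Complex.I / 3) with hε
    have he3 : ε ^ 3 = 1 := by
      rw [hε, ← Complex.exp_nat_mul]
      have h3 : ((3 : ℕ) : ℂ) * (2 * ↑Real.pi * Complex.I / 3) = 2 * ↑Real.pi * Complex.I := by
        push_cast; ring
      rw [h3, Complex.exp_two_pi_mul_I]
    have hεne : ε ≠ 1 := by
      intro h
      have hre : ε.re = Real.cos (2 * Real.pi / 3) := by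
        rw [hε]
        have : (2 : ℂ) * ↑Real.pi * Complex.I / 3 = ((2 * Real.pi / 3 : ℝ) : ℂ) * Complex.I := by
          push_cast; ring
        rw [this, Complex.exp_ofReal_mul_I_re]
      have hcos : Real.cos (2 * Real.pi / 3) = -(1/2) := by
        have : (2 : ℝ) * Real.pi / 3 = Real.pi - Real.pi / 3 := by ring
        rw [this, Real.cos_pi_sub, Real.cos_pi_div_three]
      rw [h] at hre
      simp only [Complex.one_re] at hre
      rw [hcos] at hre
      norm_num at hre
    have hs : ε ^ 2 + ε + 1 = 0 := by
      have h := sub_eq_zero.mpr he3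
      have : (ε - 1) * (ε ^ 2 + ε + 1) = 0 := by linear_combination h
      rcases mul_eq_zero.mp this with h' | h'
      · exact absurd (sub_eq_zero.mp h') hεne
      · exact h'
    -- the three terms of the sum
    have hterm1 : Complex.exp (2 * ↑Real.pi * Complex.I * ((0 : ℕ) + 1) / 3) = ε := by
      rw [hε]; norm_num
    have hterm2 : Complex.exp (2 * ↑Real.pi * Complex.I * ((1 : ℕ) + 1) / 3) = ε ^ 2 := by
      rw [hε, ← Complex.exp_nat_mul]
      norm_num
      ring_nf
    have hterm3 : Complex.exp (2 * ↑Real.pi * Complex.I * ((2 : ℕ) + 1) / 3) = 1 := by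
      have : (2 : ℂ) * ↑Real.pi * Complex.I * ((2 : ℕ) + 1) / 3 = 2 * ↑Real.pi * Complex.I := by
        push_cast; ring
      rw [this, Complex.exp_two_pi_mul_I]
    rw [Finset.sum_range_succ, Finset.sum_range_succ, Finset.sum_range_one,
        hterm1, hterm2, hterm3, mul_one]
    set a : ℂ := w * ε with ha
    set b : ℂ := w * ε ^ 2 with hb
    -- nonvanishing
    have hzc : ∀ u : ℂ, u ^ 3 = 3 * t → z - u ≠ 0 := by
      intro u hu h
      apply hz
      rw [sub_eq_zero] at h
      rw [h, hu]
    have haw : a ^ 3 = 3 * t := by rw [ha]; rw [mul_pow, he3, mul_one, hw]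
    have hbw : b ^ 3 = 3 * t := by
      rw [hb, mul_pow, ← pow_mul]
      have : ε ^ 6 = 1 := by
        have : ε ^ 6 = (ε ^ 3) ^ 2 := by ring
        rw [this, he3, one_pow]
      rw [this, mul_one, hw]
    have hza := hzc a haw
    have hzb := hzc b hbw
    have hzw := hzc w hw
    have hzt : z ^ 3 - 3 * t ≠ 0 := sub_ne_zero.mpr hz
    -- elementary symmetric relations
    have he1 : a + b + w = 0 := by
      rw [ha, hb]; linear_combination w * hs
    have he2 : a * b + a * w + b * w = 0 := by
      rw [ha, hb]; linear_combination w ^ 2 * ε * hs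
    have he3' : a * b * w = 3 * t := by
      rw [ha, hb]; linear_combination w ^ 3 * (ε - 1) * hs + hw
    have hfact : z ^ 3 - 3 * t = (z - a) * (z - b) * (z - w) := by
      linear_combination z ^ 2 * he1 - z * he2 + he3'
    rw [hq]
    rw [hfact]
    have hpoly : 6 * z * (z ^ 3 + 6 * t)
        = 2 * ((z - b) ^ 2 * (z - w) ^ 2 + (z - a) ^ 2 * (z - w) ^ 2 + (z - a) ^ 2 * (z - b) ^ 2) := by
      linear_combination (8 * z ^ 3 - 4 * (a + b + w) * z ^ 2 + 4 * (a * b + a * w + b * w) * z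
        + 4 * (a * b * w)) * he1 + (-2 * (a * b + a * w + b * w)) * he2 + (-12 * z) * he3'
    have hsum : ((z - a) ^ 2)⁻¹ + ((z - b) ^ 2)⁻¹ + ((z - w) ^ 2)⁻¹
        = ((z - b) ^ 2 * (z - w) ^ 2 + (z - a) ^ 2 * (z - w) ^ 2 + (z - a) ^ 2 * (z - b) ^ 2)
          / ((z - a) * (z - b) * (z - w)) ^ 2 := by
      field_simp
    rw [hsum]
    have hfin : 6 * z * (z ^ 3 + 6 * t) / ((z - a) * (z - b) * (z - w)) ^ 2
        = 2 * (((z - b) ^ 2 * (z - w) ^ 2 + (z - a) ^ 2 * (z - w) ^ 2 + (z - a) ^ 2 * (z - b) ^ 2)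
          / ((z - a) * (z - b) * (z - w)) ^ 2) := by
      rw [hpoly]; ring
    rw [hfin]
  · -- Part 3 : KdV
    intro t z hz0
    have hz' : z ^ 3 - 3 * t ≠ 0 := sub_ne_zero.mpr hz0
    set S : Set ℂ := {x : ℂ | x ^ 3 - 3 * t ≠ 0} with hS
    have hSopen : IsOpen S := by
      have h : S = (fun x : ℂ => x ^ 3 - 3 * t) ⁻¹' {0}ᶜ := rfl
      rw [h]
      exact (isOpen_compl_singleton).preimage (by fun_prop)
    have hzS : z ∈ S := hz'
    have hqfun : (fun w => q w t) = fun w => q₀ - 6 * w * (w ^ 3 + 6 * t) / (w ^ 3 - 3 * t) ^ 2 :=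
      funext fun w => hq w t
    set g1 : ℂ → ℂ := fun x => 12 * (x ^ 6 + 21 * t * x ^ 3 + 9 * t ^ 2) / (x ^ 3 - 3 * t) ^ 3 with hg1
    set g2 : ℂ → ℂ := fun x => -36 * (x ^ 8 + 48 * t * x ^ 5 + 90 * t ^ 2 * x ^ 2) / (x ^ 3 - 3 * t) ^ 4 with hg2
    set g3 : ℂ → ℂ := fun x => 144 * (x ^ 10 + 90 * t * x ^ 7 + 405 * t ^ 2 * x ^ 4 + 135 * t ^ 3 * x) / (x ^ 3 - 3 * t) ^ 5 with hg3
    have hd1 : ∀ x ∈ S, HasDerivAt (fun w => q w t) (g1 x) x := by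
      intro x hx
      rw [hqfun]
      have hx' : (x : ℂ) ^ 3 - 3 * t ≠ 0 := hx
      have hN : HasDerivAt (fun w : ℂ => 6 * w * (w ^ 3 + 6 * t)) (24 * x ^ 3 + 36 * t) x := by
        have h4 := (hasDerivAt_pow 4 x).const_mul (6 : ℂ)
        have h1 := (hasDerivAt_id x).const_mul (36 * t)
        have heq : (fun w : ℂ => 6 * w * (w ^ 3 + 6 * t)) = fun w => 6 * w ^ 4 + 36 * t * w := by
          funext w; ring
        rw [heq]
        have := h4.add h1
        refine this.congr_deriv ?_
        push_cast
        ring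
      have h := (aux_ratio t x 1 _ _ hN hx').const_sub q₀
      refine h.congr_deriv ?_
      rw [hg1]
      field_simp
      try ring
    have h1 : ∀ x ∈ S, deriv (fun w => q w t) x = g1 x := fun x hx => (hd1 x hx).deriv
    have hd2 : ∀ x ∈ S, HasDerivAt g1 (g2 x) x := by
      intro x hx
      have hx' : (x : ℂ) ^ 3 - 3 * t ≠ 0 := hx
      have hN : HasDerivAt (fun w : ℂ => 12 * (w ^ 6 + 21 * t * w ^ 3 + 9 * t ^ 2))
          (72 * x ^ 5 + 756 * t * x ^ 2) x := by
        have h6 := (hasDerivAt_pow 6 x).const_mul (12 : ℂ)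
        have h3 := (hasDerivAt_pow 3 x).const_mul (12 * (21 * t))
        have heq : (fun w : ℂ => 12 * (w ^ 6 + 21 * t * w ^ 3 + 9 * t ^ 2))
            = fun w => 12 * w ^ 6 + (12 * (21 * t)) * w ^ 3 + 12 * (9 * t ^ 2) := by
          funext w; ring
        rw [heq]
        have := (h6.add h3).add_const (12 * (9 * t ^ 2))
        refine this.congr_deriv ?_
        push_cast
        ring
      have h := aux_ratio t x 2 _ _ hN hx'
      rw [hg1]
      refine h.congr_deriv ?_
      rw [hg2]
      field_simp
      try ring
    have hd3 : ∀ x ∈ S, HasDerivAt g2 (g3 x) x := by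
      intro x hx
      have hx' : (x : ℂ) ^ 3 - 3 * t ≠ 0 := hx
      have hN : HasDerivAt (fun w : ℂ => -36 * (w ^ 8 + 48 * t * w ^ 5 + 90 * t ^ 2 * w ^ 2))
          (-36 * (8 * x ^ 7 + 240 * t * x ^ 4 + 180 * t ^ 2 * x)) x := by
        have h8 := (hasDerivAt_pow 8 x).const_mul (-36 : ℂ)
        have h5 := (hasDerivAt_pow 5 x).const_mul (-36 * (48 * t))
        have h2 := (hasDerivAt_pow 2 x).const_mul (-36 * (90 * t ^ 2))
        have heq : (fun w : ℂ => -36 * (w ^ 8 + 48 * t * w ^ 5 + 90 * t ^ 2 * w ^ 2))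
            = fun w => -36 * w ^ 8 + (-36 * (48 * t)) * w ^ 5 + (-36 * (90 * t ^ 2)) * w ^ 2 := by
          funext w; ring
        rw [heq]
        have := (h8.add h5).add h2
        refine this.congr_deriv ?_
        push_cast
        ring
      have h := aux_ratio t x 3 _ _ hN hx'
      rw [hg2]
      refine h.congr_deriv ?_
      rw [hg3]
      field_simp
      try ring
    have h2 : ∀ x ∈ S, deriv (fun w => deriv (fun w' => q w' t) w) x = g2 x := by
      intro x hx
      have hev : (fun w => deriv (fun w' => q w' t) w) =ᶠ[nhds x] g1 :=
        Filter.eventuallyEq_of_mem (hSopen.mem_nhds hx) h1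
      rw [hev.deriv_eq, (hd2 x hx).deriv]
    have h3 : deriv (fun w => deriv (fun w' => deriv (fun w'' => q w'' t) w') w) z = g3 z := by
      have hev : (fun w => deriv (fun w' => deriv (fun w'' => q w'' t) w') w) =ᶠ[nhds z] g2 :=
        Filter.eventuallyEq_of_mem (hSopen.mem_nhds hzS) h2
      rw [hev.deriv_eq, (hd3 z hzS).deriv]
    have hdt : HasDerivAt (fun s => q z s) (-36 * z * (2 * z ^ 3 + 3 * t) / (z ^ 3 - 3 * t) ^ 3) t := by
      have hqf : (fun s => q z s) = fun s => q₀ - 6 * z * (z ^ 3 + 6 * s) / (z ^ 3 - 3 * s) ^ 2 :=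
        funext fun s => hq z s
      rw [hqf]
      have hN : HasDerivAt (fun s : ℂ => 6 * z * (z ^ 3 + 6 * s)) (36 * z) t := by
        have h := ((hasDerivAt_id t).const_mul (36 * z)).add_const (6 * z ^ 4)
        have heq : (fun s : ℂ => 6 * z * (z ^ 3 + 6 * s)) = fun s => 36 * z * s + 6 * z ^ 4 := by
          funext s; ring
        rw [heq]
        simpa using h
      have hD : HasDerivAt (fun s : ℂ => (z ^ 3 - 3 * s) ^ 2) (2 * (z ^ 3 - 3 * t) * (-3)) t := by
        have hin : HasDerivAt (fun s : ℂ => z ^ 3 - 3 * s) (-3) t := by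
          simpa using ((hasDerivAt_id t).const_mul (3 : ℂ)).const_sub (z ^ 3)
        have h := hin.pow 2
        refine h.congr_deriv ?_
        push_cast
        ring
      have hD0 : (z ^ 3 - 3 * t) ^ 2 ≠ 0 := pow_ne_zero _ hz'
      have h := (hN.div hD hD0).const_sub q₀
      refine h.congr_deriv ?_
      field_simp
      try ring
    rw [h3, hdt.deriv, h1 z hzS, hq z t]
    rw [hg1, hg3]
    simp only
    have e : ∀ a b Y X : ℂ, a - b - (3/2) * (q₀ - X) * Y + (3/2) * q₀ * Y = a - b + (3/2) * X * Y := by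
      intros; ring
    rw [e]
    field_simp
    try ring
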